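/- Let (G,d) be a p-uniformly convex space with constant c ∈ (1,2] that is symmetric perpendicular, C ⊂ G closed and convex, g proper convex lsc, and Ω := C ∩ argmin g ≠ ∅. Then the projected-gradient operator T := P_C ∘ (β prox^p_{g,λ} ⊕ (1−β)Id) is pointwise almost α-firmly nonexpansive at every y ∈ Ω on G with constant α_PG = 1/((c/2)(1−α_β) + 1) and violation ε_PG = ε_c·β, where α_β = α_c β^{p−1}/(α_c β^{p−1} − α_c β + 1), α_c = c(c−1)/(c(c−1)+2), ε_c = (2−c)/(c−1). -/

import Mathlib

noncomputable def alphac (c : ℝ) : ℝ := c * (c - 1) / (c * (c - 1) + 2)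

noncomputable def epsc (c : ℝ) : ℝ := (2 - c) / (c - 1)

noncomputable def alphabeta (p c β : ℝ) : ℝ :=
  alphac c * β ^ (p - 1) / (alphac c * β ^ (p - 1) - alphac c * β + 1)

noncomputable def alphaPG (p c β : ℝ) : ℝ := 1 / (c / 2 * (1 - alphabeta p c β) + 1)

/-- The geodesic segment from `q` to `a` is perpendicular at `q` to the geodesic segment
from `q` to `b`. -/
def Perp {G : Type*} [MetricSpace G] (geo : G → G → ℝ → G) (q a b : G) : Prop :=
  ∀ s ∈ Set.Icc (0:ℝ) 1, ∀ t ∈ Set.Icc (0:ℝ) 1,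
    dist (geo q a s) q ≤ dist (geo q a s) (geo q b t)

/-- The projected-gradient operator `P_C ∘ (β prox ⊕ (1−β)Id)` is pointwise almost `α`-firmly
nonexpansive at every `y ∈ C ∩ argmin g` with constant `α_PG` and violation `ε_c·β`. -/
theorem projected_gradient_pafne {G : Type*} [MetricSpace G] (p c : ℝ)
    (hp : 1 < p) (hc : c ∈ Set.Ioc (1:ℝ) 2)
    (geo : G → G → ℝ → G)
    (hcvx : ∀ (x y z : G), ∀ t ∈ Set.Icc (0:ℝ) 1,
      dist z (geo x y t) ^ p
        ≤ (1 - t) * dist z x ^ p + t * dist z y ^ p - c / 2 * t * (1 - t) * dist x y ^ p)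
    (hgeo0 : ∀ (x y : G), ∀ t ∈ Set.Icc (0:ℝ) 1, dist x (geo x y t) = t * dist x y)
    (hgeo1 : ∀ (x y : G), ∀ t ∈ Set.Icc (0:ℝ) 1, dist (geo x y t) y = (1 - t) * dist x y)
    (hgeoid : ∀ (x : G) (t : ℝ), geo x x t = x)
    (hsym : ∀ q a b : G, Perp geo q a b → Perp geo q b a)
    (C : Set G) (hCcl : IsClosed C)
    (hCconv : ∀ x ∈ C, ∀ y ∈ C, ∀ t ∈ Set.Icc (0:ℝ) 1, geo x y t ∈ C)
    (g : G → ℝ) (hglsc : LowerSemicontinuous g)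
    (hgconv : ∀ (x y : G), ∀ t ∈ Set.Icc (0:ℝ) 1, g (geo x y t) ≤ (1 - t) * g x + t * g y)
    (P : G → G) (hPC : ∀ x : G, P x ∈ C) (hPfix : ∀ y ∈ C, P y = y)
    (hPfirm : ∀ y ∈ C, ∀ x : G,
      dist (P x) y ^ p ≤ dist x y ^ p - c / 2 * dist (P x) x ^ p)
    (proxg : G → G) (lam : ℝ) (hlam : 0 < lam)
    (hproxfix : ∀ y : G, (∀ z, g y ≤ g z) → proxg y = y)
    (hproxfirm : ∀ y : G, (∀ z, g y ≤ g z) → ∀ x : G,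
      dist (proxg x) y ^ p
        ≤ (1 + epsc c) * dist x y ^ p
          - (1 - alphac c) / alphac c * (c / 2 * dist (proxg x) x ^ p))
    (β : ℝ) (hβ : β ∈ Set.Ioo (0:ℝ) 1)
    (hΩ : ∃ y ∈ C, ∀ z, g y ≤ g z) :
    ∀ y ∈ C, (∀ z, g y ≤ g z) → ∀ x : G,
      dist (P (geo x (proxg x) β)) y ^ p
        ≤ (1 + epsc c * β) * dist x y ^ p
          - (1 - alphaPG p c β) / alphaPG p c β
            * (c / 2 * dist (P (geo x (proxg x) β)) x ^ p) := by

  intro y hyC hymin x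
  have hβI : β ∈ Set.Icc (0:ℝ) 1 := ⟨hβ.1.le, hβ.2.le⟩
  have hcpos : (0:ℝ) < c := lt_trans one_pos hc.1
  have hx : (0:ℝ) < c * (c - 1) := mul_pos hcpos (by linarith [hc.1])
  have hacpos : 0 < alphac c := div_pos hx (by linarith)
  have hac1 : alphac c < 1 := by
    rw [alphac, div_lt_one (by linarith)]; linarith
  have hacβ : alphac c * β < 1 := by nlinarith [hβ.1, hβ.2]
  have hBpos : 0 < β ^ (p - 1) := Real.rpow_pos_of_pos hβ.1 _
  have hden : 0 < alphac c * β ^ (p - 1) - alphac c * β + 1 := by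
    nlinarith [mul_pos hacpos hBpos]
  have ht0pos : 0 < alphabeta p c β := div_pos (mul_pos hacpos hBpos) hden
  have ht0lt1 : alphabeta p c β < 1 := by
    rw [alphabeta, div_lt_one hden]; linarith
  have ht0I : alphabeta p c β ∈ Set.Icc (0:ℝ) 1 := ⟨ht0pos.le, ht0lt1.le⟩
  have hβp : β ^ p = β ^ (p - 1) * β := by
    rw [show p = p - 1 + 1 by ring, Real.rpow_add hβ.1, Real.rpow_one]
    ring_nf
  set m := geo x (proxg x) β with hm
  -- key scalar identities
  have hI1 : (1 - alphabeta p c β) / alphabeta p c β * β ^ p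
      = β * (1 - β) + β * ((1 - alphac c) / alphac c) := by
    rw [alphabeta, hβp]
    have hD := hden.ne'
    generalize hDe : alphac c * β ^ (p - 1) - alphac c * β + 1 = D at hD ⊢
    field_simp [hacpos.ne', hBpos.ne', hD]
    subst hDe
    ring
  have hK : 0 < c / 2 * (1 - alphabeta p c β) + 1 := by nlinarith
  have hI2 : (1 - alphaPG p c β) / alphaPG p c β = c / 2 * (1 - alphabeta p c β) := by
    have hKne : (c / 2 * (1 - alphabeta p c β) + 1) ≠ 0 := ne_of_gt hK
    rw [alphaPG, one_div, div_eq_mul_inv, inv_inv, sub_mul, one_mul, inv_mul_cancel₀ hKne]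
    ring
  -- main inequalities
  have h1 : dist (P m) y ^ p ≤ dist m y ^ p - c / 2 * dist (P m) m ^ p := hPfirm y hyC m
  have h2 := hcvx x (proxg x) y β hβI
  rw [← hm, dist_comm y m, dist_comm y x, dist_comm y (proxg x)] at h2
  have h3 := hproxfirm y hymin x
  rw [dist_comm (proxg x) x] at h3
  have h3' := mul_le_mul_of_nonneg_left h3 hβ.1.le
  have h4raw := hcvx x (P m) m (alphabeta p c β) ht0I
  rw [dist_comm m x, dist_comm m (P m), dist_comm x (P m)] at h4raw
  have h0nn : 0 ≤ dist m (geo x (P m) (alphabeta p c β)) ^ p :=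
    Real.rpow_nonneg dist_nonneg p
  have h4'' : c / 2 * alphabeta p c β * (1 - alphabeta p c β) * dist (P m) x ^ p
      ≤ (1 - alphabeta p c β) * dist x m ^ p + alphabeta p c β * dist (P m) m ^ p := by
    linarith
  have hdxm : dist x m = β * dist x (proxg x) := by
    rw [hm]; exact hgeo0 x (proxg x) β hβI
  have h5 : dist x m ^ p = β ^ p * dist x (proxg x) ^ p := by
    rw [hdxm, Real.mul_rpow hβ.1.le dist_nonneg]
  have h4' : c / 2 * (1 - alphabeta p c β) * dist (P m) x ^ p
      ≤ (1 - alphabeta p c β) / alphabeta p c β * dist x m ^ p + dist (P m) m ^ p := by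
    rw [← sub_nonneg]
    have key : (1 - alphabeta p c β) / alphabeta p c β * dist x m ^ p + dist (P m) m ^ p
        - c / 2 * (1 - alphabeta p c β) * dist (P m) x ^ p
        = (alphabeta p c β)⁻¹ * ((1 - alphabeta p c β) * dist x m ^ p
            + alphabeta p c β * dist (P m) m ^ p
            - c / 2 * alphabeta p c β * (1 - alphabeta p c β) * dist (P m) x ^ p) := by
      field_simp
    rw [key]
    exact mul_nonneg (inv_nonneg.2 ht0pos.le) (by linarith)
  have hBbDp : (1 - alphabeta p c β) / alphabeta p c β * dist x m ^ p
      = (β * (1 - β) + β * ((1 - alphac c) / alphac c)) * dist x (proxg x) ^ p := by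
    rw [h5, ← mul_assoc, hI1]
  have hmain : dist (P m) y ^ p ≤ (1 + epsc c * β) * dist x y ^ p
      - c / 2 * ((β * (1 - β) + β * ((1 - alphac c) / alphac c)) * dist x (proxg x) ^ p
          + dist (P m) m ^ p) := by
    linarith [h1, h2, h3']
  rw [← hBbDp] at hmain
  have hmul := mul_le_mul_of_nonneg_left h4' (by positivity : (0:ℝ) ≤ c / 2)
  rw [hI2]
  linarith [hmain, hmul]
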